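/- Let A = [[a,b],[c,d]] ∈ SL₂(ℤ) and q a positive integer. Set α = gcd(q·a, c), γ = q/α, a' = q·a/α, c' = c/α. Then gcd(a', c') = 1, and there exist integers b', d' with a'd' − b'c' = 1 such that for all τ, q·(aτ+b)/(cτ+d) = (a'·((ατ+β)/γ) + b')/(c'·((ατ+β)/γ) + d') where β = q·b·d' − d·b'. -/

import Mathlib

/-- Decomposition used for transformations of `η(qτ)`: for `[[a,b],[c,d]] ∈ SL₂(ℤ)`
and `q > 0`, set `α = gcd(qa, c)`, `γ = q/α`, `a' = qa/α`, `c' = c/α`.  Then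
`gcd(a', c') = 1` and there are integers `b', d'` with `a'd' - b'c' = 1` such that
`q·(aτ+b)/(cτ+d) = (a'·w + b')/(c'·w + d')` where `w = (ατ+β)/γ` and
`β = q·b·d' - d·b'`. -/
theorem stmt18 (a b c d : ℤ) (hdet : a * d - b * c = 1) (q : ℕ) (hq : 0 < q) :
    ∀ (A : ℕ) (a' c' : ℤ), A = Int.gcd ((q : ℤ) * a) c →
      a' = ((q : ℤ) * a) / (A : ℤ) → c' = c / (A : ℤ) →
      IsCoprime a' c' ∧
      ∃ b' d' : ℤ, a' * d' - b' * c' = 1 ∧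
        ∀ τ : ℂ, 0 < τ.im →
          (q : ℂ) * (((a : ℂ) * τ + (b : ℂ)) / ((c : ℂ) * τ + (d : ℂ))) =
            ((a' : ℂ) * (((A : ℂ) * τ + (((q : ℤ) * b * d' - d * b' : ℤ) : ℂ)) /
                ((q : ℂ) / (A : ℂ))) + (b' : ℂ)) /
            ((c' : ℂ) * (((A : ℂ) * τ + (((q : ℤ) * b * d' - d * b' : ℤ) : ℂ)) /
                ((q : ℂ) / (A : ℂ))) + (d' : ℂ)) := by
  intro A a' c' hA ha' hc'
  have hqz : (q : ℤ) ≠ 0 := Int.natCast_ne_zero.mpr hq.ne'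
  -- a and c are not both zero
  have hac : (q : ℤ) * a ≠ 0 ∨ c ≠ 0 := by
    by_contra h
    push_neg at h
    obtain ⟨h1, h2⟩ := h
    have ha0 : a = 0 := by
      rcases mul_eq_zero.mp h1 with h | h
      · exact absurd h hqz
      · exact h
    rw [ha0, h2] at hdet; simp at hdet
  have hgpos : 0 < Int.gcd ((q : ℤ) * a) c := by
    rcases hac with h | h
    · exact Int.gcd_pos_of_ne_zero_left _ h
    · exact Int.gcd_pos_of_ne_zero_right _ h
  have hApos : 0 < A := hA ▸ hgpos
  have hAne : (A : ℤ) ≠ 0 := by exact_mod_cast hApos.ne'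
  have hAqa : (A : ℤ) ∣ (q : ℤ) * a := hA ▸ Int.gcd_dvd_left ((q : ℤ) * a) c
  have hAc : (A : ℤ) ∣ c := hA ▸ Int.gcd_dvd_right ((q : ℤ) * a) c
  -- A divides q
  have hAq : (A : ℤ) ∣ (q : ℤ) := by
    have h1 : (A : ℤ) ∣ (q : ℤ) * a * d := hAqa.mul_right d
    have h2 : (A : ℤ) ∣ (q : ℤ) * b * c := hAc.mul_left ((q : ℤ) * b)
    have : (q : ℤ) = (q : ℤ) * a * d - (q : ℤ) * b * c := by
      linear_combination (-(q : ℤ)) * hdet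
    rw [this]
    exact dvd_sub h1 h2
  -- key integer identities
  have key1 : a' * (A : ℤ) = (q : ℤ) * a := by
    rw [ha']; exact Int.ediv_mul_cancel hAqa
  have key2 : c' * (A : ℤ) = c := by
    rw [hc']; exact Int.ediv_mul_cancel hAc
  set g : ℤ := (q : ℤ) / (A : ℤ) with hg
  have key3 : g * (A : ℤ) = (q : ℤ) := Int.ediv_mul_cancel hAq
  -- coprimality
  have hcop : IsCoprime a' c' := by
    rw [Int.isCoprime_iff_gcd_eq_one, ha', hc', hA]
    exact Int.gcd_div_gcd_div_gcd hgpos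
  refine ⟨hcop, ?_⟩
  obtain ⟨v, u, huv⟩ := hcop
  refine ⟨-u, v, by linear_combination huv, ?_⟩
  set b' : ℤ := -u
  set d' : ℤ := v
  have hbez : a' * d' - b' * c' = 1 := by simp only [b', d']; linear_combination huv
  -- a'd - g = q b c'
  have h5 : a' * d - g = (q : ℤ) * b * c' := by
    apply mul_right_cancel₀ hAne
    linear_combination d * key1 - key3 - (q : ℤ) * b * key2 + (q : ℤ) * hdet
  -- numerator and denominator identities
  have hnum : a' * ((q : ℤ) * b * d' - d * b') + b' * g = (q : ℤ) * b := by
    linear_combination (q : ℤ) * b * hbez - b' * h5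
  have hden : c' * ((q : ℤ) * b * d' - d * b') + d' * g = d := by
    linear_combination d * hbez - d' * h5
  intro τ hτ
  have hgne : g ≠ 0 := by
    intro h; rw [h, zero_mul] at key3; exact hqz key3.symm
  have hgC : (g : ℂ) ≠ 0 := Int.cast_ne_zero.mpr hgne
  have hACne : (A : ℂ) ≠ 0 := Nat.cast_ne_zero.mpr hApos.ne'
  have hgamma : (q : ℂ) / (A : ℂ) = (g : ℂ) := by
    field_simp
    exact_mod_cast congrArg (fun x : ℤ => (x : ℂ)) (by linarith [key3] : (q : ℤ) = (A : ℤ) * g)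
  -- cτ + d ≠ 0
  have hcd : (c : ℂ) * τ + (d : ℂ) ≠ 0 := by
    intro h
    rcases eq_or_ne c 0 with hc0 | hc0
    · have hd0 : d ≠ 0 := by intro hd0; rw [hc0, hd0] at hdet; simp at hdet
      rw [hc0] at h; simp at h
      exact hd0 (by exact_mod_cast h)
    · have him : ((c : ℂ) * τ + (d : ℂ)).im = (c : ℝ) * τ.im := by
        simp [Complex.add_im, Complex.mul_im]
      rw [h] at him
      simp at him
      rcases him with h1 | h1
      · exact hc0 (by exact_mod_cast h1)
      · exact hτ.ne' h1
  rw [hgamma]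
  have h1C : (a' : ℂ) * (((A : ℂ) * τ + (((q : ℤ) * b * d' - d * b' : ℤ) : ℂ)) / (g : ℂ)) + (b' : ℂ) =
      ((q : ℂ) * (a : ℂ) * τ + (q : ℂ) * (b : ℂ)) / (g : ℂ) := by
    rw [← mul_div_assoc, div_add' _ _ _ hgC]
    congr 1
    have e1 : (a' : ℂ) * (A : ℂ) = (q : ℂ) * (a : ℂ) := by exact_mod_cast key1
    have e2 : (a' : ℂ) * ((q : ℂ) * (b : ℂ) * (d' : ℂ) - (d : ℂ) * (b' : ℂ)) + (b' : ℂ) * (g : ℂ) =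
        (q : ℂ) * (b : ℂ) := by exact_mod_cast hnum
    push_cast
    linear_combination τ * e1 + e2
  have h2C : (c' : ℂ) * (((A : ℂ) * τ + (((q : ℤ) * b * d' - d * b' : ℤ) : ℂ)) / (g : ℂ)) + (d' : ℂ) =
      ((c : ℂ) * τ + (d : ℂ)) / (g : ℂ) := by
    rw [← mul_div_assoc, div_add' _ _ _ hgC]
    congr 1
    have e1 : (c' : ℂ) * (A : ℂ) = (c : ℂ) := by exact_mod_cast key2
    have e2 : (c' : ℂ) * ((q : ℂ) * (b : ℂ) * (d' : ℂ) - (d : ℂ) * (b' : ℂ)) + (d' : ℂ) * (g : ℂ) =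
        (d : ℂ) := by exact_mod_cast hden
    push_cast
    linear_combination τ * e1 + e2
  rw [h1C, h2C]
  rw [div_div_div_eq]
  field_simp
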